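/- arXiv:1001.1963 — 2 statements merged into one kernel-verified Lean document; each statement's English description precedes it below -/
import Mathlib

section
/- Let μ be a full infinitely divisible measure on V that is universally centered with respect to its symmetry group (i.e., μ = Sμ for every symmetry S of μ). Then for any a > 0 and any A, B ∈ G_a(μ), writing μ^a = Aμ * δ(h_{a,A}) = Bμ * δ(h_{a,B}), we have Aμ = Bμ and h_{a,A} = h_{a,B}. -/
open MeasureTheory
open scoped MeasureTheory RealInnerProductSpace

variable {V : Type*} [NormedAddCommGroup V] [InnerProductSpace ℝ V]
  [FiniteDimensional ℝ V] [MeasurableSpace V] [BorelSpace V]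

/-- The characteristic function of a measure `μ`. -/
noncomputable def charFun (μ : Measure V) (v : V) : ℂ :=
  ∫ u, Complex.exp (((⟪u, v⟫ : ℝ) : ℂ) * Complex.I) ∂μ

/-- `M` is a Lévy (spectral) measure on `V ∖ {0}`. -/
def IsLevyMeasure (M : Measure V) : Prop :=
  M {0} = 0 ∧ ∫⁻ v, ENNReal.ofReal (‖v‖ ^ 2 / (1 + ‖v‖ ^ 2)) ∂M ≠ ⊤

/-- `μ` is the infinitely divisible measure with Lévy–Khinchine triple `[m, D, M]`. -/
def IsIDTriple (μ : Measure V) (m : V) (D : V →ₗ[ℝ] V) (M : Measure V) : Prop :=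
  ∀ u : V, _root_.charFun μ u =
    Complex.exp (Complex.I * ((⟪m, u⟫ : ℝ) : ℂ) - ((⟪D u, u⟫ : ℝ) : ℂ) / 2 +
      ∫ v, (Complex.exp (Complex.I * ((⟪v, u⟫ : ℝ) : ℂ)) - 1 -
        Complex.I * ((⟪v, u⟫ : ℝ) : ℂ) / (1 + (‖v‖ : ℂ) ^ 2)) ∂M)

/-- `μ` is full: not concentrated on any proper affine hyperplane. -/
def IsFull (μ : Measure V) : Prop :=
  ∀ (W : Submodule ℝ V) (x : V), μ {v | v - x ∈ W} = 1 → W = ⊤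

/-- `S` is a symmetry of `μ`: `μ = Sμ ∗ δ(h)` for some `h`. -/
def IsSymmetry (μ : Measure V) (S : V →ₗ[ℝ] V) : Prop :=
  ∃ h : V, μ = (μ.map S) ∗ Measure.dirac h

/-- `μa` is the `a`-th convolution power `μ^a` of the infinitely divisible measure `μ`,
expressed via Lévy–Khinchine triples: if `μ = [m, D, M]` then `μ^a = [a•m, a•D, a•M]`. -/
def IsConvPow (μ μa : Measure V) (a : ℝ) : Prop :=
  ∃ (m : V) (D : V →ₗ[ℝ] V) (M : Measure V), IsLevyMeasure M ∧
    IsIDTriple μ m D M ∧ IsIDTriple μa (a • m) (a • D) (ENNReal.ofReal a • M)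

lemma conv_dirac' (ν : Measure V) [SFinite ν] (h : V) :
    ν ∗ Measure.dirac h = ν.map (· + h) := by
  unfold Measure.conv
  rw [Measure.prod_dirac, Measure.map_map (by fun_prop) (by fun_prop)]
  rfl

lemma shift_zero (ν : Measure V) [IsProbabilityMeasure ν] (h : V)
    (heq : ν.map (· + h) = ν) : h = 0 := by
  by_contra hne
  have hc : (0:ℝ) < ⟪h, h⟫ := by
    rw [real_inner_self_eq_norm_sq]
    have : 0 < ‖h‖ := norm_pos_iff.2 hne
    positivity
  set c := (⟪h, h⟫ : ℝ) with hcdef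
  set S : ℕ → Set V := fun n => {v | ⟪v, h⟫ ≤ -(n * c)} with hS
  set T : ℕ → Set V := fun n => {v | ⟪v, h⟫ ≤ n * c} with hT
  have hmeasS : ∀ n, MeasurableSet (S n) := fun n =>
    measurableSet_le (Continuous.measurable (by continuity)) measurable_const
  have hmeasT : ∀ n, MeasurableSet (T n) := fun n =>
    measurableSet_le (Continuous.measurable (by continuity)) measurable_const
  have hstepS : ∀ n, ν (S (n+1)) = ν (S n) := by
    intro n
    have hpre : (· + h) ⁻¹' (S n) = S (n+1) := by
      ext v
      simp only [Set.mem_preimage, hS, Set.mem_setOf_eq, inner_add_left]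
      constructor <;> intro hv <;> push_cast at hv ⊢ <;> nlinarith [hv]
    rw [← hpre, ← Measure.map_apply (by fun_prop) (hmeasS n), heq]
  have hstepT : ∀ n, ν (T n) = ν (T (n+1)) := by
    intro n
    have hpre : (· + h) ⁻¹' (T (n+1)) = T n := by
      ext v
      simp only [Set.mem_preimage, hT, Set.mem_setOf_eq, inner_add_left]
      constructor <;> intro hv <;> push_cast at hv ⊢ <;> nlinarith [hv]
    rw [← hpre, ← Measure.map_apply (by fun_prop) (hmeasT (n+1)), heq]
  have hconstS : ∀ n, ν (S n) = ν (S 0) := by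
    intro n; induction n with
    | zero => rfl
    | succ k ih => rw [hstepS k, ih]
  have hconstT : ∀ n, ν (T n) = ν (T 0) := by
    intro n; induction n with
    | zero => rfl
    | succ k ih => rw [← hstepT k, ih]
  have hemptyS : ⋂ n, S n = ∅ := by
    ext v
    simp only [Set.mem_iInter, hS, Set.mem_setOf_eq, Set.mem_empty_iff_false, iff_false]
    push_neg
    obtain ⟨n, hn⟩ := exists_nat_gt (-⟪v, h⟫ / c)
    refine ⟨n, ?_⟩
    rw [div_lt_iff₀ hc] at hn
    linarith
  have hunivT : ⋃ n, T n = Set.univ := by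
    ext v
    simp only [Set.mem_iUnion, hT, Set.mem_setOf_eq, Set.mem_univ, iff_true]
    obtain ⟨n, hn⟩ := exists_nat_gt (⟪v, h⟫ / c)
    refine ⟨n, ?_⟩
    rw [div_lt_iff₀ hc] at hn
    linarith
  have hantiS : Antitone S := by
    intro m n hmn v hv
    simp only [hS, Set.mem_setOf_eq] at *
    have : (m:ℝ) * c ≤ n * c :=
      mul_le_mul_of_nonneg_right (by exact_mod_cast hmn) hc.le
    linarith
  have hmonoT : Monotone T := by
    intro m n hmn v hv
    simp only [hT, Set.mem_setOf_eq] at *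
    have : (m:ℝ) * c ≤ n * c :=
      mul_le_mul_of_nonneg_right (by exact_mod_cast hmn) hc.le
    linarith
  have hlimS := tendsto_measure_iInter_atTop (fun n => (hmeasS n).nullMeasurableSet) hantiS
    ⟨0, measure_ne_top ν _⟩
  have hlimT := tendsto_measure_iUnion_atTop (μ := ν) hmonoT
  rw [hemptyS] at hlimS
  rw [hunivT] at hlimT
  have h0 : ν (S 0) = 0 := by
    refine tendsto_nhds_unique ?_ (by simpa using hlimS)
    have he : (⇑ν ∘ S) = fun _ => ν (S 0) := funext hconstS
    rw [he]
    exact tendsto_const_nhds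
  have h1 : ν (T 0) = 1 := by
    refine tendsto_nhds_unique ?_ (by simpa using hlimT)
    have he : (ν ∘ T) = fun _ => ν (T 0) := funext hconstT
    rw [he]
    exact tendsto_const_nhds
  have hST : S 0 = T 0 := by
    ext v; simp [hS, hT]
  rw [hST, h1] at h0
  exact one_ne_zero h0

lemma dirac_of_abs_one (ν : Measure ℝ) [IsProbabilityMeasure ν]
    (hφ : ∀ t : ℝ, ‖∫ x, Complex.exp (((t * x : ℝ) : ℂ) * Complex.I) ∂ν‖ = 1) :
    ∃ c : ℝ, ν {c} = 1 := by
  set π := ν.prod ν with hπdef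
  have key : ∀ t : ℝ, ∀ᵐ p ∂π, Real.cos (t * (p.1 - p.2)) = 1 := by
    intro t
    set φ := ∫ x, Complex.exp (((t * x : ℝ) : ℂ) * Complex.I) ∂ν with hφdef
    have hconj : (starRingEnd ℂ) φ = ∫ x, Complex.exp (((-(t * x) : ℝ) : ℂ) * Complex.I) ∂ν := by
      rw [hφdef, ← integral_conj]
      congr 1; ext x
      rw [← Complex.exp_conj]
      congr 1
      simp [Complex.conj_I]
    have hprod : φ * (starRingEnd ℂ) φ
        = ∫ p, Complex.exp (((t * (p.1 - p.2) : ℝ) : ℂ) * Complex.I) ∂π := by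
      rw [hφdef, hconj, hπdef, ← integral_prod_mul]
      congr 1; ext p
      rw [← Complex.exp_add]
      congr 1
      push_cast
      ring
    have habs : φ * (starRingEnd ℂ) φ = 1 := by
      rw [Complex.mul_conj]
      norm_cast
      rw [Complex.normSq_eq_norm_sq, hφ t]
      norm_num
    have hint : Integrable (fun p : ℝ × ℝ =>
        Complex.exp (((t * (p.1 - p.2) : ℝ) : ℂ) * Complex.I)) π := by
      apply Integrable.mono' (integrable_const (1:ℝ))
      · apply Continuous.aestronglyMeasurable; continuity
      · filter_upwards with p
        rw [Complex.norm_exp_ofReal_mul_I]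
    have hcosint : Integrable (fun p : ℝ × ℝ => Real.cos (t * (p.1 - p.2))) π := by
      apply Integrable.mono' (integrable_const (1:ℝ))
      · apply Continuous.aestronglyMeasurable; continuity
      · filter_upwards with p
        rw [Real.norm_eq_abs]
        exact Real.abs_cos_le_one _
    have hcos : ∫ p, Real.cos (t * (p.1 - p.2)) ∂π = 1 := by
      have hre := Complex.reCLM.integral_comp_comm hint
      simp only [Complex.reCLM_apply] at hre
      have : ∀ p : ℝ × ℝ, (Complex.exp (((t * (p.1 - p.2) : ℝ) : ℂ) * Complex.I)).re
          = Real.cos (t * (p.1 - p.2)) := fun p => Complex.exp_ofReal_mul_I_re _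
      simp only [this] at hre
      rw [hre, ← hprod, habs, Complex.one_re]
    have hzero : ∫ p, (1 - Real.cos (t * (p.1 - p.2))) ∂π = 0 := by
      rw [integral_sub (integrable_const 1) hcosint, hcos, integral_const]
      simp
    have hae := (integral_eq_zero_iff_of_nonneg
      (fun p => by simpa using Real.cos_le_one (t * (p.1 - p.2)))
      ((integrable_const 1).sub hcosint)).1 hzero
    filter_upwards [hae] with p hp
    have : (1:ℝ) - Real.cos (t * (p.1 - p.2)) = 0 := hp
    linarith
  have hdiagae : ∀ᵐ p ∂π, p.1 = p.2 := by
    filter_upwards [key 1, key (Real.sqrt 2)] with p hp1 hp2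
    rw [Real.cos_eq_one_iff] at hp1 hp2
    obtain ⟨n, hn⟩ := hp1
    obtain ⟨m, hm⟩ := hp2
    by_contra hne
    have hd : p.1 - p.2 ≠ 0 := sub_ne_zero.2 hne
    have hπ0 : (Real.pi : ℝ) ≠ 0 := Real.pi_ne_zero
    have hn0 : (n:ℝ) ≠ 0 := by
      intro h0
      rw [h0] at hn
      simp at hn
      exact hd (by linarith)
    have hs : Real.sqrt 2 = (m : ℝ) / n := by
      have h1 : p.1 - p.2 = n * (2 * Real.pi) := by linarith
      rw [h1] at hm
      have h2 : (2:ℝ) * Real.pi ≠ 0 := by positivity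
      have hmn : (m:ℝ) = Real.sqrt 2 * n := by
        apply mul_right_cancel₀ h2
        rw [hm]; ring
      rw [eq_div_iff hn0, hmn]
    exact irrational_sqrt_two ⟨(m:ℚ)/(n:ℚ), by push_cast; rw [← hs]⟩
  have hdiagset : MeasurableSet {p : ℝ × ℝ | p.1 = p.2} :=
    measurableSet_eq_fun measurable_fst measurable_snd
  have hπdiag : π {p : ℝ × ℝ | p.1 = p.2} = 1 := by
    have := (ae_iff.1 hdiagae)
    rw [← prob_compl_eq_zero_iff hdiagset]
    exact this
  have hcompute : π {p : ℝ × ℝ | p.1 = p.2} = ∫⁻ x, ν {x} ∂ν := by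
    rw [hπdef, Measure.prod_apply hdiagset]
    apply lintegral_congr
    intro x
    congr 1
    ext y
    simp [eq_comm]
  have hmeasf : Measurable fun x => ν {x} := by
    have h := measurable_measure_prodMk_left (ν := ν) hdiagset
    have : (fun x : ℝ => ν (Prod.mk x ⁻¹' {p : ℝ × ℝ | p.1 = p.2})) = fun x => ν {x} := by
      funext x; congr 1; ext y; simp [eq_comm]
    rwa [this] at h
  have hsub : ∫⁻ x, (1 - ν {x}) ∂ν = 0 := by
    rw [lintegral_sub hmeasf]
    · rw [← hcompute, hπdiag, lintegral_one]
      simp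
    · rw [← hcompute, hπdiag]; exact ENNReal.one_ne_top
    · exact ae_of_all _ fun x => prob_le_one
  have hae1 := (lintegral_eq_zero_iff ((measurable_const.sub hmeasf))).1 hsub
  have hne : (MeasureTheory.ae ν).NeBot := ae_neBot.2 (IsProbabilityMeasure.ne_zero ν)
  obtain ⟨c, hc⟩ := hae1.exists
  refine ⟨c, le_antisymm prob_le_one ?_⟩
  simp only [Pi.zero_apply] at hc
  have := tsub_eq_zero_iff_le.1 hc
  exact this

lemma measurableSet_coset (W : Submodule ℝ V) (x : V) :
    MeasurableSet {v : V | v - x ∈ W} := by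
  have hW : IsClosed (W : Set V) := Submodule.closed_of_finiteDimensional W
  have : {v : V | v - x ∈ W} = (fun v => v - x) ⁻¹' (W : Set V) := rfl
  rw [this]
  exact (hW.preimage (by continuity)).measurableSet

/-- If `κ` is not full, the characteristic function has modulus one along some line. -/
lemma exists_abs_charFun_one_of_not_full (κ : Measure V) [IsProbabilityMeasure κ]
    (h : ¬ IsFull κ) :
    ∃ u : V, u ≠ 0 ∧ ∀ t : ℝ, ‖_root_.charFun κ (t • u)‖ = 1 := by
  rw [IsFull] at h
  push_neg at h
  obtain ⟨W, x, hmeas1, hWne⟩ := h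
  have hWbot : Wᗮ ≠ ⊥ := by
    intro hbot
    exact hWne (Submodule.orthogonal_eq_bot_iff.1 hbot)
  obtain ⟨u, huW, hune⟩ := Submodule.exists_mem_ne_zero_of_ne_bot hWbot
  refine ⟨u, hune, fun t => ?_⟩
  have hae : ∀ᵐ v ∂κ, v - x ∈ W := by
    rw [ae_iff]
    have := prob_compl_eq_zero_iff (measurableSet_coset W x) |>.2 hmeas1
    exact this
  have hcf : _root_.charFun κ (t • u) = Complex.exp (((t * ⟪x, u⟫ : ℝ) : ℂ) * Complex.I) := by
    rw [_root_.charFun]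
    rw [integral_congr_ae (g := fun _ => Complex.exp (((t * ⟪x, u⟫ : ℝ) : ℂ) * Complex.I)) ?_]
    · rw [integral_const]; simp
    · filter_upwards [hae] with v hv
      have : ⟪v, u⟫ = ⟪x, u⟫ := by
        have h0 : ⟪v - x, u⟫ = 0 := (Submodule.mem_orthogonal W u).1 huW _ hv
        rw [inner_sub_left] at h0
        linarith
      rw [real_inner_smul_right, this]
  rw [hcf, Complex.norm_exp_ofReal_mul_I]

/-- If the characteristic function has modulus one along a line, `κ` is not full. -/
lemma not_full_of_abs_charFun_one (κ : Measure V) [IsProbabilityMeasure κ]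
    (u : V) (hune : u ≠ 0) (h : ∀ t : ℝ, ‖_root_.charFun κ (t • u)‖ = 1) :
    ¬ IsFull κ := by
  set f : V → ℝ := fun v => ⟪v, u⟫ with hf
  have hfc : Continuous f := by
    rw [hf]; continuity
  set ν : Measure ℝ := κ.map f with hν
  have : IsProbabilityMeasure ν := Measure.isProbabilityMeasure_map hfc.measurable.aemeasurable
  have hφ : ∀ t : ℝ, ‖∫ x, Complex.exp (((t * x : ℝ) : ℂ) * Complex.I) ∂ν‖ = 1 := by
    intro t
    rw [hν, integral_map hfc.measurable.aemeasurable (by apply Continuous.aestronglyMeasurable; continuity)]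
    have : ∀ v : V, Complex.exp (((t * f v : ℝ) : ℂ) * Complex.I)
        = Complex.exp (((⟪v, t • u⟫ : ℝ) : ℂ) * Complex.I) := by
      intro v
      rw [real_inner_smul_right]
    simp only [this]
    exact h t
  obtain ⟨c, hc⟩ := dirac_of_abs_one ν hφ
  intro hfull
  have huu : (0:ℝ) < ⟪u, u⟫ := by
    rw [real_inner_self_eq_norm_sq]
    have : 0 < ‖u‖ := norm_pos_iff.2 hune
    positivity
  set W : Submodule ℝ V := LinearMap.ker (innerₛₗ ℝ u) with hW
  set x : V := (c / ⟪u, u⟫) • u with hx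
  have hset : {v : V | v - x ∈ W} = f ⁻¹' {c} := by
    ext v
    simp only [hW, Set.mem_setOf_eq, LinearMap.mem_ker, innerₛₗ_apply_apply, Set.mem_preimage,
      Set.mem_singleton_iff, hf]
    rw [inner_sub_right, hx, real_inner_smul_right, real_inner_comm]
    constructor <;> intro hv
    · have : ⟪v, u⟫ = c / ⟪u,u⟫ * ⟪u,u⟫ := by linarith [hv]
      rw [this]; field_simp
    · rw [hv]; field_simp; ring
  have hmeas : κ {v : V | v - x ∈ W} = 1 := by
    rw [hset, ← Measure.map_apply hfc.measurable (measurableSet_singleton c)]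
    exact hc
  have := hfull W x hmeas
  have huW : u ∈ W := this ▸ Submodule.mem_top
  rw [hW, LinearMap.mem_ker, innerₛₗ_apply_apply] at huW
  exact absurd huW (ne_of_gt huu)

lemma abs_charFun_transfer (μ μa : Measure V) (a : ℝ) (ha : 0 < a)
    (hpow : IsConvPow μ μa a) (u : V) (h1 : ‖_root_.charFun μa u‖ = 1) :
    ‖_root_.charFun μ u‖ = 1 := by
  obtain ⟨m, D, M, _, hμ, hμa⟩ := hpow
  set z := Complex.I * ((⟪m, u⟫ : ℝ) : ℂ) - ((⟪D u, u⟫ : ℝ) : ℂ) / 2 +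
      ∫ v, (Complex.exp (Complex.I * ((⟪v, u⟫ : ℝ) : ℂ)) - 1 -
        Complex.I * ((⟪v, u⟫ : ℝ) : ℂ) / (1 + (‖v‖ : ℂ) ^ 2)) ∂M with hz
  have hma : _root_.charFun μa u = Complex.exp ((a:ℂ) * z) := by
    rw [hμa u]
    congr 1
    rw [hz]
    rw [integral_smul_measure, ENNReal.toReal_ofReal ha.le]
    have h1' : ⟪a • m, u⟫ = a * ⟪m, u⟫ := real_inner_smul_left m u a
    have h2' : ⟪(a • D) u, u⟫ = a * ⟪D u, u⟫ := by
      rw [LinearMap.smul_apply]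
      exact real_inner_smul_left (D u) u a
    rw [h1', h2']
    push_cast
    rw [Complex.real_smul]
    ring
  have hmu : _root_.charFun μ u = Complex.exp z := by rw [hμ u, hz]
  have hre : a * z.re = 0 := by
    rw [hma, Complex.norm_exp] at h1
    have := (Real.exp_eq_one_iff _).1 h1
    simpa [Complex.mul_re] using this
  have hzre : z.re = 0 := by
    rcases mul_eq_zero.1 hre with h | h
    · exact absurd h (ne_of_gt ha)
    · exact h
  rw [hmu, Complex.norm_exp, hzre, Real.exp_zero]


lemma isFull_map_add (κ : Measure V) [IsProbabilityMeasure κ] (h : IsFull κ) (y : V) :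
    IsFull (κ.map (· + y)) := by
  intro W x hm
  apply h W (x - y)
  rw [Measure.map_apply (by fun_prop) (measurableSet_coset W x)] at hm
  have hpre : (· + y) ⁻¹' {v : V | v - x ∈ W} = {v : V | v - (x - y) ∈ W} := by
    ext v
    simp only [Set.mem_preimage, Set.mem_setOf_eq]
    rw [show v + y - x = v - (x - y) by abel]
  rwa [hpre] at hm

/-- **Lemma 6.** If the full infinitely divisible `μ` is universally centered with respect
to its symmetry group, then for `A, B ∈ G_a(μ)` with `μ^a = Aμ ∗ δ(h_A) = Bμ ∗ δ(h_B)`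
we have `Aμ = Bμ` and `h_A = h_B`. -/
theorem map_eq_and_shift_eq_of_mem_Ga
    (μ μa : Measure V) [IsProbabilityMeasure μ] [IsProbabilityMeasure μa]
    (a : ℝ) (ha : 0 < a) (hfull : IsFull μ) (hpow : IsConvPow μ μa a)
    (hcent : ∀ S : V →ₗ[ℝ] V, IsSymmetry μ S → μ.map S = μ)
    (A B : V →ₗ[ℝ] V) (hA hB : V)
    (hAeq : μa = (μ.map A) ∗ Measure.dirac hA)
    (hBeq : μa = (μ.map B) ∗ Measure.dirac hB) :
    μ.map A = μ.map B ∧ hA = hB := by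
  have hAm : Measurable (⇑A) := A.continuous_of_finiteDimensional.measurable
  have hBm : Measurable (⇑B) := B.continuous_of_finiteDimensional.measurable
  have hPA : IsProbabilityMeasure (μ.map A) := Measure.isProbabilityMeasure_map hAm.aemeasurable
  have hPB : IsProbabilityMeasure (μ.map B) := Measure.isProbabilityMeasure_map hBm.aemeasurable
  have hμafull : IsFull μa := by
    by_contra hnot
    obtain ⟨u, hune, habs⟩ := exists_abs_charFun_one_of_not_full μa hnot
    have habs' : ∀ t : ℝ, ‖_root_.charFun μ (t • u)‖ = 1 :=
      fun t => abs_charFun_transfer μ μa a ha hpow _ (habs t)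
    exact not_full_of_abs_charFun_one μ u hune habs' hfull
  have hAconv : μa = (μ.map A).map (· + hA) := by rw [hAeq, conv_dirac']
  have hAμ : μ.map A = μa.map (· + (-hA)) := by
    rw [hAconv, Measure.map_map (by fun_prop) (by fun_prop)]
    have : ((· + (-hA)) ∘ (· + hA) : V → V) = id := by funext v; simp
    rw [this, Measure.map_id]
  have hAμfull : IsFull (μ.map A) := by
    rw [hAμ]; exact isFull_map_add μa hμafull (-hA)
  have hAsurj : Function.Surjective A := by
    rw [← LinearMap.range_eq_top]
    apply hAμfull (LinearMap.range A) 0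
    rw [Measure.map_apply hAm (measurableSet_coset _ _)]
    have hpre : (⇑A) ⁻¹' {v : V | v - 0 ∈ LinearMap.range A} = Set.univ := by
      ext v; simp
    rw [hpre]
    simp
  have hAinj : Function.Injective A := LinearMap.injective_iff_surjective.2 hAsurj
  set e := LinearEquiv.ofBijective A ⟨hAinj, hAsurj⟩ with he
  have heS : Measurable ⇑(e.symm) :=
    (e.symm : V →ₗ[ℝ] V).continuous_of_finiteDimensional.measurable
  set h := hB - hA with hh
  have hBconv : μa = (μ.map B).map (· + hB) := by rw [hBeq, conv_dirac']
  have hABrel : μ.map A = (μ.map B).map (· + h) := by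
    rw [hAμ, hBconv, Measure.map_map (by fun_prop) (by fun_prop)]
    congr 1
    funext v
    simp only [Function.comp_apply, hh]
    abel
  set S : V →ₗ[ℝ] V := (e.symm : V →ₗ[ℝ] V) ∘ₗ B with hSdef
  have hSm : Measurable ⇑S := S.continuous_of_finiteDimensional.measurable
  have hPS : IsProbabilityMeasure (μ.map S) := Measure.isProbabilityMeasure_map hSm.aemeasurable
  have hsym : μ = (μ.map S) ∗ Measure.dirac (e.symm h) := by
    have h1 : μ = (μ.map A).map ⇑(e.symm) := by
      rw [Measure.map_map heS hAm]
      have hcomp : (⇑(e.symm) ∘ ⇑A : V → V) = id := by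
        funext v
        simp only [Function.comp_apply, id_eq]
        exact e.symm_apply_apply v
      rw [hcomp, Measure.map_id]
    have hcoeS : ⇑S = ⇑(e.symm) ∘ ⇑B := by
      rw [hSdef]; rfl
    calc μ = (μ.map A).map ⇑(e.symm) := h1
      _ = ((μ.map B).map (· + h)).map ⇑(e.symm) := by rw [hABrel]
      _ = (μ.map B).map (⇑(e.symm) ∘ (· + h)) := Measure.map_map heS (by fun_prop)
      _ = (μ.map B).map ((· + e.symm h) ∘ ⇑(e.symm)) := by
          congr 1
          funext w
          simp only [Function.comp_apply]
          exact map_add e.symm w h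
      _ = ((μ.map B).map ⇑(e.symm)).map (· + e.symm h) :=
          (Measure.map_map (by fun_prop) heS).symm
      _ = (μ.map S).map (· + e.symm h) := by
          rw [Measure.map_map heS hBm, ← hcoeS]
      _ = (μ.map S) ∗ Measure.dirac (e.symm h) := (conv_dirac' _ _).symm
  have hmapS := hcent S ⟨e.symm h, hsym⟩
  have hshift : μ.map (· + e.symm h) = μ := by
    conv_rhs => rw [hsym]
    rw [conv_dirac', hmapS]
  have h0 : e.symm h = 0 := shift_zero μ _ hshift
  have hh0 : h = 0 := by
    have := congrArg (⇑e) h0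
    rwa [e.apply_symm_apply, map_zero] at this
  constructor
  · rw [hABrel, hh0]
    have : ((· + (0:V)) : V → V) = id := by funext v; simp
    rw [this, Measure.map_id]
  · have : hB - hA = 0 := hh ▸ hh0
    have := sub_eq_zero.1 this
    exact this.symm
end

section
/- Let μ be a full infinitely divisible measure on V, universally centered with respect to its symmetry group, with μ^c = Aμ * δ(h_c) for some 0 < c < 1 and all A ∈ G_c(μ). Suppose for some positive integer n there exists ĥ₀ ∈ V with h_{c^n} = Aⁿ ĥ₀ − cⁿ ĥ₀, where h_{c^n} = p_n(c, A) h_c and p_n(c, A) = c^{n−1}I + c^{n−2}A + ⋯ + A^{n−1}. Then h_c is orthogonal to N(A* − cI), i.e., there exists ĥ ∈ V with h_c = Aĥ − cĥ. -/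
open MeasureTheory
open scoped MeasureTheory RealInnerProductSpace

variable {V : Type*} [NormedAddCommGroup V] [InnerProductSpace ℝ V]
  [FiniteDimensional ℝ V] [MeasurableSpace V] [BorelSpace V]

/-- **Proposition 10 (key implication, discrete case).** Let `μ` be full, infinitely
divisible, universally centered, with `μ^c = Aμ ∗ δ(h_c)` for all `A ∈ G_c(μ)`,
`0 < c < 1`. If for some `n ≥ 1` the vector `h_{cⁿ} = pₙ(c, A) h_c`
(`pₙ(c,A) = c^{n−1}I + c^{n−2}A + ⋯ + A^{n−1}`) can be centered, i.e.
`h_{cⁿ} = Aⁿ h₀ − cⁿ h₀` for some `h₀`, then `h_c = A ĥ − c ĥ` for some `ĥ`. -/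
theorem discrete_centering_propagates
    (μ μc : Measure V) [IsProbabilityMeasure μ] [IsProbabilityMeasure μc]
    (c : ℝ) (hc0 : 0 < c) (hc1 : c < 1) (hfull : IsFull μ) (hpow : IsConvPow μ μc c)
    (hcent : ∀ S : V →ₗ[ℝ] V, IsSymmetry μ S → μ.map S = μ)
    (h_c : V)
    (hGc : ∀ A : V →ₗ[ℝ] V, (∃ h : V, μc = (μ.map A) ∗ Measure.dirac h) →
      μc = (μ.map A) ∗ Measure.dirac h_c)
    (A : V →ₗ[ℝ] V) (hA : μc = (μ.map A) ∗ Measure.dirac h_c)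
    (n : ℕ) (hn : 1 ≤ n)
    (hcenter : ∃ h₀ : V,
      (∑ k ∈ Finset.range n, c ^ (n - 1 - k) • A ^ k) h_c = (A ^ n) h₀ - c ^ n • h₀) :
    ∃ hhat : V, h_c = A hhat - c • hhat := by
  obtain ⟨h₀, hh₀⟩ := hcenter
  set T : V →ₗ[ℝ] V := A - c • (1 : V →ₗ[ℝ] V) with hT
  have hrange : h_c ∈ LinearMap.range T := by
    rw [← (LinearMap.range T).orthogonal_orthogonal]
    intro v hv
    -- `v` is orthogonal to the range of `T`, i.e. `A* v = c v`.
    have hAv : LinearMap.adjoint A v = c • v := by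
      have key : ∀ x : V, ⟪x, LinearMap.adjoint A v - c • v⟫ = 0 := by
        intro x
        have h1 : ⟪T x, v⟫ = 0 := by
          exact hv (T x) ⟨x, rfl⟩
        have h2 : ⟪T x, v⟫ = ⟪x, LinearMap.adjoint A v - c • v⟫ := by
          simp only [hT, LinearMap.sub_apply, LinearMap.smul_apply, Module.End.one_apply,
            inner_sub_left, inner_sub_right, inner_smul_left, inner_smul_right,
            LinearMap.adjoint_inner_right, conj_trivial]
        rw [← h2, h1]
      have := key (LinearMap.adjoint A v - c • v)
      rw [inner_self_eq_zero] at this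
      exact sub_eq_zero.mp this
    -- hence `(A^k)* v = c^k v` for all `k`.
    have hpowv : ∀ k : ℕ, LinearMap.adjoint (A ^ k) v = c ^ k • v := by
      intro k
      induction k with
      | zero => simp [← LinearMap.star_eq_adjoint]
      | succ k ih =>
        have : (A ^ (k + 1) : V →ₗ[ℝ] V) = (A ^ k) ∘ₗ A := by
          rw [pow_succ]; rfl
        rw [this, LinearMap.adjoint_comp, LinearMap.comp_apply, ih, _root_.map_smul, hAv,
          smul_smul, pow_succ]
    -- inner product of the LHS of `hh₀` with `v` is `n * c^(n-1) * ⟪h_c, v⟫`.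
    have hLHS : ⟪(∑ k ∈ Finset.range n, c ^ (n - 1 - k) • A ^ k) h_c, v⟫
        = (n : ℝ) * c ^ (n - 1) * ⟪h_c, v⟫ := by
      rw [LinearMap.sum_apply, sum_inner]
      have : ∀ k ∈ Finset.range n,
          ⟪(c ^ (n - 1 - k) • A ^ k : V →ₗ[ℝ] V) h_c, v⟫ = c ^ (n - 1) * ⟪h_c, v⟫ := by
        intro k hk
        rw [LinearMap.smul_apply, inner_smul_left, ← LinearMap.adjoint_inner_right,
          hpowv k, inner_smul_right]
        have hk' : n - 1 - k + k = n - 1 := by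
          have := Finset.mem_range.mp hk; omega
        rw [RCLike.conj_to_real, ← mul_assoc, ← pow_add, hk']
      rw [Finset.sum_congr rfl this, Finset.sum_const, Finset.card_range, nsmul_eq_mul,
        mul_assoc]
    -- inner product of the RHS with `v` is `0`.
    have hRHS : ⟪(A ^ n) h₀ - c ^ n • h₀, v⟫ = 0 := by
      rw [inner_sub_left, ← LinearMap.adjoint_inner_right, hpowv n, inner_smul_left,
        inner_smul_right, RCLike.conj_to_real]
      ring
    have hzero : (n : ℝ) * c ^ (n - 1) * ⟪h_c, v⟫ = 0 := by
      rw [← hLHS, hh₀, hRHS]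
    have hn' : (n : ℝ) * c ^ (n - 1) ≠ 0 := by
      apply mul_ne_zero
      · exact Nat.cast_ne_zero.mpr (by omega)
      · exact (pow_pos hc0 _).ne'
    have : ⟪h_c, v⟫ = 0 := by
      rcases mul_eq_zero.mp hzero with h | h
      · exact absurd h hn'
      · exact h
    rwa [real_inner_comm] at this
  obtain ⟨hhat, hhhat⟩ := hrange
  refine ⟨hhat, ?_⟩
  rw [← hhhat]
  simp [hT]
end
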